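/- arXiv:2207.07261 — 5 statements merged into one kernel-verified Lean document; each statement's English description precedes it below -/
import Mathlib

section
/- With the bathymetry limiter α_ij defined piecewise by α_ij = min{1, 2·h̄_ji/(b_j − b_i)} if b_i < b_j, α_ij = 1 if b_i = b_j, and α_ij = min{1, 2·h̄_ij/(b_i − b_j)} if b_i > b_j, where h̄_ij, h̄_ji ≥ 0, the limited bar states h̄_ij^b := h̄_ij + (α_ij/2)(b_j − b_i) and h̄_ji^b := h̄_ji + (α_ij/2)(b_i − b_j) are both nonnegative, and α_ij ∈ [0,1]. -/
/-- Positivity of the limited bar states produced by the bathymetry limiter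
`α_ij`, together with `α_ij ∈ [0,1]`. -/
theorem bathymetry_limiter_positivity (hbarij hbarji bi bj : ℝ)
    (hij : 0 ≤ hbarij) (hji : 0 ≤ hbarji) (α : ℝ)
    (hα : α = if bi < bj then min 1 (2 * hbarji / (bj - bi))
          else if bi = bj then 1
          else min 1 (2 * hbarij / (bi - bj))) :
    0 ≤ α ∧ α ≤ 1 ∧
      0 ≤ hbarij + (α / 2) * (bj - bi) ∧
      0 ≤ hbarji + (α / 2) * (bi - bj) := by
  rcases lt_trichotomy bi bj with h | h | h
  · rw [if_pos h] at hα
    have hd : (0:ℝ) < bj - bi := by linarith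
    have hα0 : 0 ≤ α := by
      rw [hα]
      exact le_min zero_le_one (div_nonneg (by linarith) hd.le)
    have hα1 : α ≤ 1 := hα ▸ min_le_left _ _
    refine ⟨hα0, hα1, by nlinarith, ?_⟩
    have hle : α ≤ 2 * hbarji / (bj - bi) := hα ▸ min_le_right _ _
    nlinarith [(le_div_iff₀ hd).mp hle]
  · rw [if_neg (by linarith), if_pos h] at hα
    subst h
    refine ⟨by linarith, by linarith, by simpa using hij, by simpa using hji⟩
  · rw [if_neg (by linarith), if_neg (by linarith)] at hα
    have hd : (0:ℝ) < bi - bj := by linarith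
    have hα0 : 0 ≤ α := by
      rw [hα]
      exact le_min zero_le_one (div_nonneg (by linarith) hd.le)
    have hα1 : α ≤ 1 := hα ▸ min_le_left _ _
    have hle : α ≤ 2 * hbarij / (bi - bj) := hα ▸ min_le_right _ _
    refine ⟨hα0, hα1, ?_, by nlinarith⟩
    nlinarith [(le_div_iff₀ hd).mp hle]
end

section
/- Well-balancedness of the positivity-preserving limiter: for a lake-at-rest state with h_i ≥ 0 for all i, if for a pair of neighboring nodes (i,j) either (i) h_i = h_j = 0, or (ii) h_i + b_i = h_j + b_j, then in case (i) α_ij·(b_j − b_i) = 0, and in case (ii) α_ij = 1; consequently the flux d_ij(h_j − h_i + α_ij(b_j − b_i)) of the limited continuity equation vanishes. -/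
/-- Well-balancedness of the positivity-preserving limiter (Lemma 4.2):
for lake-at-rest data with zero velocity (so that `h̄_ij = h̄_ji = (hᵢ+hⱼ)/2`),
(i) `hᵢ = hⱼ = 0` implies `α_ij (bⱼ − bᵢ) = 0`, (ii) `Hᵢ = Hⱼ` implies
`α_ij = 1`, and in either case the limited continuity flux
`d_ij (hⱼ − hᵢ + α_ij (bⱼ − bᵢ))` vanishes. -/
theorem limiter_well_balanced (hi hj bi bj d : ℝ)
    (hhi : 0 ≤ hi) (hhj : 0 ≤ hj) (hd : 0 ≤ d) (α : ℝ)
    (hα : α = if bi < bj then min 1 (2 * ((hi + hj) / 2) / (bj - bi))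
          else if bi = bj then 1
          else min 1 (2 * ((hi + hj) / 2) / (bi - bj))) :
    ((hi = 0 ∧ hj = 0) → α * (bj - bi) = 0) ∧
    (hi + bi = hj + bj → α = 1) ∧
    (((hi = 0 ∧ hj = 0) ∨ hi + bi = hj + bj) →
      d * (hj - hi + α * (bj - bi)) = 0) := by
  have h1 : (hi = 0 ∧ hj = 0) → α * (bj - bi) = 0 := by
    rintro ⟨hi0, hj0⟩
    subst hi0; subst hj0
    rcases lt_trichotomy bi bj with h | h | h
    · simp [hα, h, min_eq_right, div_nonneg, le_of_lt (sub_pos.mpr h)]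
    · simp [hα, h]
    · have hne : ¬ bi < bj := not_lt.mpr h.le
      have hne' : bi ≠ bj := ne_of_gt h
      simp [hα, hne, hne']
  have h2 : hi + bi = hj + bj → α = 1 := by
    intro hH
    rcases lt_trichotomy bi bj with h | h | h
    · have hpos : 0 < bj - bi := sub_pos.mpr h
      have heq : bj - bi = hi - hj := by linarith
      have : 2 * ((hi + hj) / 2) / (bj - bi) = (hi + hj) / (hi - hj) := by
        rw [heq]; ring_nf
      have hge : 1 ≤ (hi + hj) / (hi - hj) := by
        rw [le_div_iff₀ (by linarith)]; linarith
      rw [hα, if_pos h, this, min_eq_left hge]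
    · simp [hα, h]
    · have hpos : 0 < bi - bj := sub_pos.mpr h
      have hge : 1 ≤ 2 * ((hi + hj) / 2) / (bi - bj) := by
        rw [le_div_iff₀ hpos]; linarith
      rw [hα, if_neg (not_lt.mpr h.le), if_neg (ne_of_gt h), min_eq_left hge]
  refine ⟨h1, h2, ?_⟩
  rintro (⟨hi0, hj0⟩ | hH)
  · rw [h1 ⟨hi0, hj0⟩, hi0, hj0]; ring
  · rw [h2 hH]; have : hj - hi = -(bj - bi) := by linarith
    rw [this]; ring
end

section
/- The scalar convex-limiting formula preserves local bounds: if h̄_ij, h̄_ji ∈ [min{h_i^min, h_j^min}, max{h_i^max, h_j^max}] with h_i^min ≤ h̄_ij ≤ h_i^max and h_j^min ≤ h̄_ji ≤ h_j^max, and f* is defined by f* = min{f, 2d·min{h_i^max − h̄_ij, h̄_ji − h_j^min}} when f ≥ 0 and f* = max{f, 2d·max{h_i^min − h̄_ij, h̄_ji − h_j^max}} when f < 0 (with d > 0), then h_i^min ≤ h̄_ij + f*/(2d) ≤ h_i^max and h_j^min ≤ h̄_ji − f*/(2d) ≤ h_j^max. -/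
/-- The scalar monolithic convex limiting formula preserves the local bounds
for the flux-corrected bar states. -/
theorem mcl_local_bounds (d f himin himax hjmin hjmax hbarij hbarji : ℝ)
    (hd : 0 < d)
    (h1 : himin ≤ hbarij) (h2 : hbarij ≤ himax)
    (h3 : hjmin ≤ hbarji) (h4 : hbarji ≤ hjmax)
    (fstar : ℝ)
    (hfstar : fstar =
      if 0 ≤ f then
        min f (2 * d * min (himax - hbarij) (hbarji - hjmin))
      else
        max f (2 * d * max (himin - hbarij) (hbarji - hjmax))) :
    himin ≤ hbarij + fstar / (2 * d) ∧ hbarij + fstar / (2 * d) ≤ himax ∧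
    hjmin ≤ hbarji - fstar / (2 * d) ∧ hbarji - fstar / (2 * d) ≤ hjmax := by
  have hd2 : (0:ℝ) < 2 * d := by linarith
  have key : 2 * d * (himin - hbarij) ≤ fstar ∧ fstar ≤ 2 * d * (himax - hbarij) ∧
      2 * d * (hbarji - hjmax) ≤ fstar ∧ fstar ≤ 2 * d * (hbarji - hjmin) := by
    subst hfstar
    split_ifs with hf
    · refine ⟨?_, ?_, ?_, ?_⟩
      · exact le_trans (by nlinarith) (le_min hf (by nlinarith [min_le_left (himax - hbarij) (hbarji - hjmin), min_le_right (himax - hbarij) (hbarji - hjmin), le_min (show (0:ℝ) ≤ himax - hbarij by linarith) (show (0:ℝ) ≤ hbarji - hjmin by linarith)]))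
      · exact le_trans (min_le_right _ _) (by nlinarith [min_le_left (himax - hbarij) (hbarji - hjmin)])
      · exact le_trans (by nlinarith) (le_min hf (by nlinarith [le_min (show (0:ℝ) ≤ himax - hbarij by linarith) (show (0:ℝ) ≤ hbarji - hjmin by linarith)]))
      · exact le_trans (min_le_right _ _) (by nlinarith [min_le_right (himax - hbarij) (hbarji - hjmin)])
    · push_neg at hf
      have hm2 : 2 * d * max (himin - hbarij) (hbarji - hjmax) ≤ 0 := by
        nlinarith [max_le (show himin - hbarij ≤ (0:ℝ) by linarith) (show hbarji - hjmax ≤ (0:ℝ) by linarith)]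
      have hl1 : 2 * d * (himin - hbarij) ≤ 2 * d * max (himin - hbarij) (hbarji - hjmax) := by
        nlinarith [le_max_left (himin - hbarij) (hbarji - hjmax)]
      have hl2 : 2 * d * (hbarji - hjmax) ≤ 2 * d * max (himin - hbarij) (hbarji - hjmax) := by
        nlinarith [le_max_right (himin - hbarij) (hbarji - hjmax)]
      have hr := le_max_right f (2 * d * max (himin - hbarij) (hbarji - hjmax))
      refine ⟨by linarith, max_le (by nlinarith) (by nlinarith), by linarith, max_le (by nlinarith) (by nlinarith)⟩
  obtain ⟨k1, k2, k3, k4⟩ := key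
  have e1 : himin - hbarij ≤ fstar / (2 * d) := by rw [le_div_iff₀ hd2]; nlinarith
  have e2 : fstar / (2 * d) ≤ himax - hbarij := by rw [div_le_iff₀ hd2]; nlinarith
  have e3 : hbarji - hjmax ≤ fstar / (2 * d) := by rw [le_div_iff₀ hd2]; nlinarith
  have e4 : fstar / (2 * d) ≤ hbarji - hjmin := by rw [div_le_iff₀ hd2]; nlinarith
  exact ⟨by linarith, by linarith, by linarith, by linarith⟩
end

section
/- For the homogeneous 1D shallow water system with flux f(h, m) = (m, m²/h + (g/2)h²), the Lax–Friedrichs bar state ū = ((u_i + u_j)/2) − (f(u_j) − f(u_i))·c/(2d) has nonnegative first component h̄ ≥ 0 whenever d ≥ max{|v_i| + √(g h_i), |v_j| + √(g h_j)}·|c|, h_i, h_j ≥ 0, and v_k = m_k/h_k (with v_k := 0 if h_k = 0). -/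
/-- Nonnegativity of the first component of the Lax–Friedrichs bar state for
the 1D shallow water equations, provided the graph viscosity `d` dominates
the maximal wave speed times `|c|`. -/
theorem lf_bar_state_height_nonneg (g hi hj vi vj c d : ℝ)
    (hg : 0 < g) (hhi : 0 ≤ hi) (hhj : 0 ≤ hj) (hd : 0 < d)
    (mi mj : ℝ) (hmi : mi = hi * vi) (hmj : mj = hj * vj)
    (hlam : max (|vi| + Real.sqrt (g * hi)) (|vj| + Real.sqrt (g * hj)) *
      |c| ≤ d) :
    0 ≤ (hi + hj) / 2 - (mj - mi) * c / (2 * d) := by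
  have hsi : 0 ≤ Real.sqrt (g * hi) := Real.sqrt_nonneg _
  have hsj : 0 ≤ Real.sqrt (g * hj) := Real.sqrt_nonneg _
  have hvi : |vi| * |c| ≤ d := by
    calc |vi| * |c| ≤ (|vi| + Real.sqrt (g * hi)) * |c| := by
          apply mul_le_mul_of_nonneg_right (by linarith) (abs_nonneg c)
      _ ≤ _ := le_trans (mul_le_mul_of_nonneg_right (le_max_left _ _) (abs_nonneg c)) hlam
  have hvj : |vj| * |c| ≤ d := by
    calc |vj| * |c| ≤ (|vj| + Real.sqrt (g * hj)) * |c| := by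
          apply mul_le_mul_of_nonneg_right (by linarith) (abs_nonneg c)
      _ ≤ _ := le_trans (mul_le_mul_of_nonneg_right (le_max_right _ _) (abs_nonneg c)) hlam
  have hkey : (mj - mi) * c ≤ (hi + hj) * d := by
    have h1 : (mj - mi) * c ≤ |mj * c| + |mi * c| := by
      calc (mj - mi) * c ≤ |(mj - mi) * c| := le_abs_self _
        _ = |mj * c - mi * c| := by ring_nf
        _ ≤ |mj * c| + |mi * c| := abs_sub _ _
    have h2 : |mi * c| ≤ hi * d := by
      rw [hmi, abs_mul, abs_mul, abs_of_nonneg hhi, mul_assoc]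
      exact mul_le_mul_of_nonneg_left hvi hhi
    have h3 : |mj * c| ≤ hj * d := by
      rw [hmj, abs_mul, abs_mul, abs_of_nonneg hhj, mul_assoc]
      exact mul_le_mul_of_nonneg_left hvj hhj
    nlinarith
  rw [sub_nonneg, div_le_div_iff₀ (by linarith : (0:ℝ) < 2 * d) two_pos]
  nlinarith
end

section
/- For a lake-at-rest configuration satisfying the discrete well-balancedness condition (for every edge either h_i = h_j = 0 or H_i = H_j) with zero discharge, both the limited continuity flux d_ij(h_j − h_i + α_ij(b_j − b_i)) − ((hv)_j − (hv)_i)c_ij and the limited momentum edge term d_ij((hv)_j − (hv)_i + ((v_i+v_j)/2)α_ij(b_j−b_i)) − (f_j^{hv} − f_i^{hv})c_ij − g((h_i+h_j)/2)α_ij(b_j−b_i)c_ij vanish, so the full low-order semi-discretization has zero right-hand side and the lake at rest is a discrete steady state. -/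
/-- Full well-balancedness of the low-order scheme: for a lake-at-rest
configuration (zero discharge, and on each edge either both heights vanish
or the free surface elevations coincide), both the limited continuity flux
and the limited momentum edge term vanish, so the lake at rest is a discrete
steady state. -/
theorem low_order_well_balanced (g hi hj bi bj c d : ℝ)
    (hg : 0 < g) (hhi : 0 ≤ hi) (hhj : 0 ≤ hj) (hd : 0 ≤ d)
    (vi vj mi mj : ℝ) (hvi : vi = 0) (hvj : vj = 0)
    (hmi : mi = 0) (hmj : mj = 0)
    (hwb : (hi = 0 ∧ hj = 0) ∨ hi + bi = hj + bj)
    (α : ℝ)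
    (hα : α = if bi < bj then min 1 (2 * ((hi + hj) / 2) / (bj - bi))
          else if bi = bj then 1
          else min 1 (2 * ((hi + hj) / 2) / (bi - bj))) :
    d * (hj - hi + α * (bj - bi)) - (mj - mi) * c = 0 ∧
    d * (mj - mi + ((vi + vj) / 2) * α * (bj - bi)) -
      ((g / 2) * hj ^ 2 - (g / 2) * hi ^ 2) * c -
      g * ((hi + hj) / 2) * α * (bj - bi) * c = 0 := by
  subst hvi hvj hmi hmj
  rcases hwb with ⟨h1, h2⟩ | hH
  · -- dry case: both heights vanish, so α * (bj - bi) = 0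
    subst h1 h2
    have key : α * (bj - bi) = 0 := by
      rcases lt_trichotomy bi bj with h | h | h
      · rw [hα, if_pos h]
        simp
      · rw [h]; ring
      · rw [hα, if_neg (not_lt_of_gt h), if_neg (ne_of_gt h)]
        simp
    refine ⟨by linear_combination d * key, by ring⟩
  · -- wet case: free surfaces coincide, so α * (bj - bi) = bj - bi
    have key : α * (bj - bi) = bj - bi := by
      rcases lt_trichotomy bi bj with h | h | h
      · have hpos : 0 < bj - bi := by linarith
        have hge : (1:ℝ) ≤ 2 * ((hi + hj) / 2) / (bj - bi) := by
          rw [le_div_iff₀ hpos]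
          nlinarith
        rw [hα, if_pos h, min_eq_left hge, one_mul]
      · rw [hα, if_neg (h ▸ lt_irrefl bi), if_pos h, one_mul]
      · have hpos : 0 < bi - bj := by linarith
        have hge : (1:ℝ) ≤ 2 * ((hi + hj) / 2) / (bi - bj) := by
          rw [le_div_iff₀ hpos]
          nlinarith
        rw [hα, if_neg (not_lt_of_gt h), if_neg (ne_of_gt h), min_eq_left hge, one_mul]
    have hdiff : hj - hi = -(bj - bi) := by linarith
    constructor
    · linear_combination d * key + d * hdiff
    · linear_combination (-g * ((hi + hj) / 2) * c) * key + (-(g / 2) * (hi + hj) * c) * hdiff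
end
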